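/- For every n ≥ 4: if there exists a unit vector ψ in (ℂ²)^{⊗4} that admits no basis under strings of local unitaries (i.e., no 16 Kronecker products of 2×2 unitaries map ψ to an orthonormal basis of ℂ^{16}), then there exists a unit vector ψ' in (ℂ²)^{⊗n} that admits no basis under strings of local unitaries (i.e., no 2^n Kronecker products of 2×2 unitaries map ψ' to an orthonormal basis of ℂ^{2^n}). -/

import Mathlib

open Matrix

/-- A family of vectors in `ℂ^κ` forms an orthonormal basis: the vectors are
pairwise orthogonal unit vectors and they span the whole space. -/
def IsONBasis {ι κ : Type*} [Fintype ι] [DecidableEq ι] [Fintype κ] (v : ι → κ → ℂ) : Prop :=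
  (∀ j j', star (v j) ⬝ᵥ v j' = if j = j' then 1 else 0) ∧
    Submodule.span ℂ (Set.range v) = ⊤

/-- The `n`-fold Kronecker product `U 0 ⊗ ⋯ ⊗ U (n-1)` of `2×2` matrices, acting on
`(ℂ²)^{⊗n} ≅ ℂ^{2^n}` indexed by `Fin n → Fin 2`. -/
def kronPow {n : ℕ} (U : Fin n → Matrix (Fin 2) (Fin 2) ℂ) :
    Matrix (Fin n → Fin 2) (Fin n → Fin 2) ℂ :=
  Matrix.of fun x y => ∏ k, U k (x k) (y k)

/-- An `n`-qubit state `ψ` admits a basis under local unitaries: there exist `2^n` strings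
of local `2×2` unitaries mapping `ψ` to an orthonormal basis of `ℂ^{2^n}`. -/
def AdmitsBasis (n : ℕ) (ψ : (Fin n → Fin 2) → ℂ) : Prop :=
  ∃ U : Fin (2 ^ n) → Fin n → Matrix (Fin 2) (Fin 2) ℂ,
    (∀ j k, U j k ∈ Matrix.unitaryGroup (Fin 2) ℂ) ∧
    IsONBasis (fun j => kronPow (U j) *ᵥ ψ)

namespace Stmt3Aux

/-- determinant pairing of two 2-vectors -/
def dt (b c : Fin 2 → ℂ) : ℂ := b 0 * c 1 - b 1 * c 0

lemma dp_expand (b c : Fin 2 → ℂ) :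
    star b ⬝ᵥ c = (starRingEnd ℂ) (b 0) * c 0 + (starRingEnd ℂ) (b 1) * c 1 := by
  simp [dotProduct, Fin.sum_univ_two]

lemma dt_self (b : Fin 2 → ℂ) : dt b b = 0 := by simp [dt]; ring

lemma dp_conj_symm (b c : Fin 2 → ℂ) :
    star b ⬝ᵥ c = (starRingEnd ℂ) (star c ⬝ᵥ b) := by
  simp [dp_expand, map_add, _root_.map_mul]; ring

/-- resolution identity (Gram) wrt a unit vector b -/
lemma gram_dp (b : Fin 2 → ℂ) (hb : star b ⬝ᵥ b = 1) (c c' : Fin 2 → ℂ) :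
    star c ⬝ᵥ c' =
      (starRingEnd ℂ) (star b ⬝ᵥ c) * (star b ⬝ᵥ c')
        + (starRingEnd ℂ) (dt b c) * (dt b c') := by
  rw [dp_expand] at hb
  simp only [dp_expand, dt, map_add, _root_.map_mul, map_sub, RingHomCompTriple.comp_apply,
    Complex.conj_conj, RingHom.id_apply]
  linear_combination -((starRingEnd ℂ) (c 0) * c' 0 + (starRingEnd ℂ) (c 1) * c' 1) * hb

lemma gram_dt (b : Fin 2 → ℂ) (hb : star b ⬝ᵥ b = 1) (c c' : Fin 2 → ℂ) :
    dt c c' = (star b ⬝ᵥ c) * (dt b c') - (dt b c) * (star b ⬝ᵥ c') := by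
  rw [dp_expand] at hb
  simp only [dp_expand, dt]
  linear_combination -(c 0 * c' 1 - c 1 * c' 0) * hb

lemma coords_ne_zero (b c : Fin 2 → ℂ) (hb : star b ⬝ᵥ b = 1) (hc : star c ⬝ᵥ c = 1) :
    ¬ (star b ⬝ᵥ c = 0 ∧ dt b c = 0) := by
  rintro ⟨h1, h2⟩
  have := gram_dp b hb c c
  rw [hc, h1, h2] at this
  simp at this

lemma conj_ne_zero {x : ℂ} (hx : x ≠ 0) : (starRingEnd ℂ) x ≠ 0 := by simpa using hx

lemma select {J : Type*} [Fintype J] [DecidableEq J] (b : J → Fin 2 → ℂ)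
    (hb : ∀ j, star (b j) ⬝ᵥ b j = 1) :
    ∃ T : Finset J, Fintype.card J ≤ 2 * T.card ∧
      ∀ j ∈ T, ∀ j' ∈ T, j ≠ j' → star (b j) ⬝ᵥ b j' ≠ 0 := by
  classical
  have core : ∀ N : ℕ, ∀ s : Finset J, s.card ≤ N →
      (∀ j ∈ s, ∀ j', (star (b j) ⬝ᵥ b j' = 0 ∨ dt (b j) (b j') = 0) → j' ∈ s) →
      ∃ T : Finset J, T ⊆ s ∧ s.card ≤ 2 * T.card ∧
        ∀ j ∈ T, ∀ j' ∈ T, j ≠ j' → star (b j) ⬝ᵥ b j' ≠ 0 := by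
    intro N
    induction N with
    | zero =>
      intro s hcard _
      exact ⟨∅, Finset.empty_subset _, by simpa using hcard, by simp⟩
    | succ N IH =>
      intro s hcard hclosed
      rcases s.eq_empty_or_nonempty with rfl | ⟨j₀, hj₀⟩
      · exact ⟨∅, Finset.empty_subset _, by simp, by simp⟩
      have hnz : ∀ j, ¬(star (b j₀) ⬝ᵥ b j = 0 ∧ dt (b j₀) (b j) = 0) := fun j =>
        coords_ne_zero _ _ (hb j₀) (hb j)
      set L := s.filter (fun j => dt (b j₀) (b j) = 0) with hL
      set O := s.filter (fun j => star (b j₀) ⬝ᵥ b j = 0) with hO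
      have hCs : L ∪ O ⊆ s :=
        Finset.union_subset (Finset.filter_subset _ _) (Finset.filter_subset _ _)
      have hs'mem : ∀ j ∈ s \ (L ∪ O), star (b j₀) ⬝ᵥ b j ≠ 0 ∧ dt (b j₀) (b j) ≠ 0 := by
        intro j hj
        obtain ⟨hjs, hjC⟩ := Finset.mem_sdiff.mp hj
        rw [Finset.mem_union, hL, hO, Finset.mem_filter, Finset.mem_filter] at hjC
        push_neg at hjC
        exact ⟨fun h => hjC.2 hjs h, fun h => hjC.1 hjs h⟩
      have hCmem : ∀ j ∈ L ∪ O, star (b j₀) ⬝ᵥ b j = 0 ∨ dt (b j₀) (b j) = 0 := by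
        intro j hj
        rw [Finset.mem_union, hL, hO, Finset.mem_filter, Finset.mem_filter] at hj
        tauto
      have key : ∀ j ∈ s \ (L ∪ O), ∀ j' ∈ L ∪ O,
          star (b j) ⬝ᵥ b j' ≠ 0 ∧ dt (b j) (b j') ≠ 0 := by
        intro j hj j' hj'
        obtain ⟨ha, hb'⟩ := hs'mem j hj
        rw [gram_dp (b j₀) (hb j₀) (b j) (b j'), gram_dt (b j₀) (hb j₀) (b j) (b j')]
        rcases hCmem j' hj' with h0 | h0
        · have hβ' : dt (b j₀) (b j') ≠ 0 := fun h => hnz j' ⟨h0, h⟩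
          rw [h0]
          constructor
          · rw [mul_zero, zero_add]
            exact mul_ne_zero (conj_ne_zero hb') hβ'
          · rw [mul_zero, sub_zero]
            exact mul_ne_zero ha hβ'
        · have hα' : star (b j₀) ⬝ᵥ b j' ≠ 0 := fun h => hnz j' ⟨h, h0⟩
          rw [h0]
          constructor
          · rw [mul_zero, add_zero]
            exact mul_ne_zero (conj_ne_zero ha) hα'
          · rw [mul_zero, zero_sub, neg_ne_zero]
            exact mul_ne_zero hb' hα'
      have hclosed' : ∀ j ∈ s \ (L ∪ O), ∀ j',
          (star (b j) ⬝ᵥ b j' = 0 ∨ dt (b j) (b j') = 0) → j' ∈ s \ (L ∪ O) := by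
        intro j hj j' hrel
        have hj's : j' ∈ s := hclosed j (Finset.mem_sdiff.mp hj).1 j' hrel
        rw [Finset.mem_sdiff]
        refine ⟨hj's, fun hj'C => ?_⟩
        obtain ⟨k1, k2⟩ := key j hj j' hj'C
        rcases hrel with h | h
        exacts [k1 h, k2 h]
      have hj₀C : j₀ ∈ L ∪ O := by
        rw [Finset.mem_union, hL, Finset.mem_filter]
        exact Or.inl ⟨hj₀, dt_self _⟩
      have hlt : (s \ (L ∪ O)).card < s.card := by
        apply Finset.card_lt_card
        exact ⟨Finset.sdiff_subset, fun hsub => (Finset.mem_sdiff.mp (hsub hj₀)).2 hj₀C⟩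
      obtain ⟨T', hT's, hT'card, hT'pair⟩ := IH (s \ (L ∪ O)) (by omega) hclosed'
      set K := if L.card ≤ O.card then O else L with hK
      have hKC : K ⊆ L ∪ O := by
        rw [hK]; split_ifs
        · exact Finset.subset_union_right
        · exact Finset.subset_union_left
      have hCcard : (L ∪ O).card ≤ 2 * K.card := by
        have h := Finset.card_union_le L O
        rw [hK]; split_ifs with h' <;> omega
      have hKpair : ∀ j ∈ K, ∀ j' ∈ K, star (b j) ⬝ᵥ b j' ≠ 0 := by
        intro j hj j' hj'
        rw [gram_dp (b j₀) (hb j₀) (b j) (b j')]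
        rw [hK] at hj hj'
        split_ifs at hj hj' with h
        · rw [hO, Finset.mem_filter] at hj hj'
          have h1 : dt (b j₀) (b j) ≠ 0 := fun hh => hnz j ⟨hj.2, hh⟩
          have h2 : dt (b j₀) (b j') ≠ 0 := fun hh => hnz j' ⟨hj'.2, hh⟩
          rw [hj.2, map_zero, zero_mul, zero_add]
          exact mul_ne_zero (conj_ne_zero h1) h2
        · rw [hL, Finset.mem_filter] at hj hj'
          have h1 : star (b j₀) ⬝ᵥ b j ≠ 0 := fun hh => hnz j ⟨hh, hj.2⟩
          have h2 : star (b j₀) ⬝ᵥ b j' ≠ 0 := fun hh => hnz j' ⟨hh, hj'.2⟩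
          rw [hj.2, map_zero, zero_mul, add_zero]
          exact mul_ne_zero (conj_ne_zero h1) h2
      have hdisj : Disjoint T' K := by
        rw [Finset.disjoint_left]
        intro x hx hxK
        exact (Finset.mem_sdiff.mp (hT's hx)).2 (hKC hxK)
      refine ⟨T' ∪ K, ?_, ?_, ?_⟩
      · exact Finset.union_subset (hT's.trans Finset.sdiff_subset) (hKC.trans hCs)
      · rw [Finset.card_union_of_disjoint hdisj]
        have h2 := Finset.card_sdiff_add_card_eq_card hCs
        omega
      · intro j hj j' hj' hne
        rw [Finset.mem_union] at hj hj'
        rcases hj with hj | hj <;> rcases hj' with hj' | hj'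
        · exact hT'pair j hj j' hj' hne
        · exact (key j (hT's hj) j' (hKC hj')).1
        · intro h
          exact (key j' (hT's hj') j (hKC hj)).1
            (by rw [dp_conj_symm (b j') (b j), h, map_zero])
        · exact hKpair j hj j' hj'
  obtain ⟨T, _, hcard, hpair⟩ := core (Finset.univ.card) Finset.univ le_rfl
    (fun j _ j' _ => Finset.mem_univ j')
  exact ⟨T, by simpa [Finset.card_univ] using hcard, hpair⟩
def extend {m : ℕ} (ψ : (Fin m → Fin 2) → ℂ) : (Fin (m+1) → Fin 2) → ℂ :=
  fun x => (if x 0 = 0 then 1 else 0) * ψ (Fin.tail x)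

lemma sum_cons {m : ℕ} (f : (Fin (m+1) → Fin 2) → ℂ) :
    ∑ x : Fin (m+1) → Fin 2, f x
      = ∑ t : Fin 2, ∑ r : Fin m → Fin 2, f (Fin.cons t r) := by
  have h := Fintype.sum_equiv (Fin.consEquiv (fun _ => Fin 2)) (fun p => f (Fin.cons p.1 p.2)) f (fun p => rfl)
  rw [← h, Fintype.sum_prod_type]

lemma dot_split {m : ℕ} (p p' : Fin 2 → ℂ) (q q' : (Fin m → Fin 2) → ℂ) :
    (star (fun x : Fin (m+1) → Fin 2 => p (x 0) * q (Fin.tail x)) ⬝ᵥ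
      (fun x => p' (x 0) * q' (Fin.tail x)))
      = (star p ⬝ᵥ p') * (star q ⬝ᵥ q') := by
  simp only [dotProduct, Pi.star_apply]
  rw [sum_cons (fun x => star (p (x 0) * q (Fin.tail x)) * (p' (x 0) * q' (Fin.tail x)))]
  rw [Finset.sum_mul_sum]
  refine Finset.sum_congr rfl fun t _ => Finset.sum_congr rfl fun r _ => ?_
  simp only [Fin.cons_zero, Fin.tail_cons, star_mul']
  ring

lemma extend_norm {m : ℕ} (ψ : (Fin m → Fin 2) → ℂ) :
    star (extend ψ) ⬝ᵥ extend ψ = star ψ ⬝ᵥ ψ := by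
  have : ∀ x : Fin (m+1) → Fin 2, extend ψ x = (fun t : Fin 2 => if t = 0 then 1 else 0) (x 0) * (ψ (Fin.tail x)) := fun x => rfl
  calc star (extend ψ) ⬝ᵥ extend ψ
      = (star (fun t : Fin 2 => if t = 0 then (1:ℂ) else 0) ⬝ᵥ (fun t : Fin 2 => if t = 0 then 1 else 0)) * (star ψ ⬝ᵥ ψ) := by
        rw [← dot_split]; rfl
    _ = star ψ ⬝ᵥ ψ := by
        rw [show (star (fun t : Fin 2 => if t = 0 then (1:ℂ) else 0) ⬝ᵥ (fun t : Fin 2 => if t = 0 then 1 else 0)) = 1 by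
          simp [dotProduct, Fin.sum_univ_two]]
        rw [one_mul]

lemma kron_decomp {m : ℕ} (U : Fin (m+1) → Matrix (Fin 2) (Fin 2) ℂ)
    (ψ : (Fin m → Fin 2) → ℂ) (x : Fin (m+1) → Fin 2) :
    (kronPow U *ᵥ extend ψ) x
      = U 0 (x 0) 0 * ((kronPow (fun k => U k.succ)) *ᵥ ψ) (Fin.tail x) := by
  have hterm : ∀ (t : Fin 2) (r : Fin m → Fin 2),
      kronPow U x (Fin.cons t r) * extend ψ (Fin.cons t r)
      = (if t = 0 then 1 else 0) * (U 0 (x 0) t * ((∏ k : Fin m, U k.succ (x k.succ) (r k)) * ψ r)) := by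
    intro t r
    simp only [kronPow, extend, Matrix.of_apply, Fin.prod_univ_succ, Fin.cons_zero,
      Fin.cons_succ, Fin.tail_cons]
    ring
  show (∑ y, kronPow U x y * extend ψ y) = _
  rw [sum_cons (fun y => kronPow U x y * extend ψ y)]
  simp only [hterm]
  rw [Fin.sum_univ_two]
  simp only [reduceIte, if_neg (show ¬(1 : Fin 2) = 0 by decide), one_mul, zero_mul,
    Finset.sum_const_zero, add_zero]
  have hmv : ((kronPow (fun k => U k.succ)) *ᵥ ψ) (Fin.tail x)
      = ∑ r : Fin m → Fin 2, kronPow (fun k => U k.succ) (Fin.tail x) r * ψ r := rfl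
  rw [hmv, Finset.mul_sum]
  apply Finset.sum_congr rfl
  intro r _
  rfl

lemma span_of_onb {ι κ : Type*} [Fintype ι] [DecidableEq ι] [Nonempty ι] [Fintype κ]
    (v : ι → κ → ℂ) (hcard : Fintype.card ι = Fintype.card κ)
    (h : ∀ j j', star (v j) ⬝ᵥ v j' = if j = j' then 1 else 0) :
    Submodule.span ℂ (Set.range v) = ⊤ := by
  let v' : ι → EuclideanSpace ℂ κ := fun i => WithLp.toLp 2 (v i)
  have ho : Orthonormal ℂ v' := by
    rw [orthonormal_iff_ite]
    intro i j
    have := h i j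
    simpa [v', PiLp.inner_apply, RCLike.inner_apply, dotProduct, mul_comm] using this
  have := ho.linearIndependent.span_eq_top_of_card_eq_finrank
    (hcard.trans finrank_euclideanSpace.symm)
  have h2 := congrArg (Submodule.map (WithLp.linearEquiv 2 ℂ (κ → ℂ)).toLinearMap) this
  rw [Submodule.map_span, ← Set.range_comp, Submodule.map_top, LinearEquiv.range] at h2
  exact h2

lemma card_le_of_onb {ι κ : Type*} [Fintype ι] [DecidableEq ι] [Fintype κ]
    (v : ι → κ → ℂ) (h : ∀ j j', star (v j) ⬝ᵥ v j' = if j = j' then 1 else 0) :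
    Fintype.card ι ≤ Fintype.card κ := by
  classical
  let v' : ι → EuclideanSpace ℂ κ := fun i => WithLp.toLp 2 (v i)
  have ho : Orthonormal ℂ v' := by
    rw [orthonormal_iff_ite]
    intro i j
    have := h i j
    simpa [v', PiLp.inner_apply, RCLike.inner_apply, dotProduct, mul_comm] using this
  have := ho.linearIndependent.fintype_card_le_finrank
  simpa using this

lemma step {m : ℕ} (ψ : (Fin m → Fin 2) → ℂ)
    (h : AdmitsBasis (m+1) (extend ψ)) : AdmitsBasis m ψ := by
  classical
  obtain ⟨U, hU, horth, -⟩ := h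
  set a : Fin (2 ^ (m+1)) → (Fin m → Fin 2) → ℂ :=
    fun j => kronPow (fun k => U j k.succ) *ᵥ ψ with ha
  set b : Fin (2 ^ (m+1)) → Fin 2 → ℂ := fun j i => U j 0 i 0 with hbdef
  -- b j is a unit vector (column of a unitary)
  have hbu : ∀ j, star (b j) ⬝ᵥ b j = 1 := by
    intro j
    have h1 : star (U j 0) * U j 0 = 1 := (Unitary.mem_iff.mp (hU j 0)).1
    have h2 : (star (U j 0) * U j 0) 0 0 = (1 : Matrix (Fin 2) (Fin 2) ℂ) 0 0 := by rw [h1]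
    rw [Matrix.mul_apply] at h2
    simp only [Matrix.one_apply_eq] at h2
    rw [← h2]
    simp [b, dotProduct, Matrix.star_apply, mul_comm]
  -- product structure of the inner products
  have hprod : ∀ j j', star (kronPow (U j) *ᵥ extend ψ) ⬝ᵥ (kronPow (U j') *ᵥ extend ψ)
      = (star (b j) ⬝ᵥ b j') * (star (a j) ⬝ᵥ a j') := by
    intro j j'
    have e1 : (kronPow (U j) *ᵥ extend ψ) = fun x => b j (x 0) * a j (Fin.tail x) := by
      funext x; exact kron_decomp (U j) ψ x
    have e2 : (kronPow (U j') *ᵥ extend ψ) = fun x => b j' (x 0) * a j' (Fin.tail x) := by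
      funext x; exact kron_decomp (U j') ψ x
    rw [e1, e2]
    exact dot_split (b j) (b j') (a j) (a j')
  have hkey : ∀ j j', (star (b j) ⬝ᵥ b j') * (star (a j) ⬝ᵥ a j')
      = if j = j' then 1 else 0 := fun j j' => (hprod j j').symm.trans (horth j j')
  -- select a good sub-family
  obtain ⟨T, hTcard, hTpair⟩ := select b hbu
  have hTanorth : ∀ j ∈ T, ∀ j' ∈ T, star (a j) ⬝ᵥ a j' = if j = j' then 1 else 0 := by
    intro j hj j' hj'
    by_cases hne : j = j'
    · subst hne
      have := hkey j j
      rw [if_pos rfl, hbu j, one_mul] at this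
      rw [this, if_pos rfl]
    · have := hkey j j'
      rw [if_neg hne] at this
      rw [if_neg hne]
      rcases mul_eq_zero.mp this with h0 | h0
      · exact absurd h0 (hTpair j hj j' hj' hne)
      · exact h0
  -- T has exactly 2^m elements
  have hcardκ : Fintype.card (Fin m → Fin 2) = 2 ^ m := by
    simp [Fintype.card_fun]
  have hTle : T.card ≤ 2 ^ m := by
    have := card_le_of_onb (fun (j : T) => a j)
      (fun j j' => by
        rw [hTanorth j j.2 j' j'.2]
        by_cases h : (j : Fin (2 ^ (m+1))) = (j' : Fin (2 ^ (m+1)))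
        · rw [if_pos h, if_pos (Subtype.ext h)]
        · rw [if_neg h, if_neg (fun hh => h (congrArg _ hh))])
    rwa [Fintype.card_coe, hcardκ] at this
  have hTge : 2 ^ m ≤ T.card := by
    have h2 : 2 ^ (m+1) = 2 ^ m * 2 := pow_succ 2 m
    have h3 : Fintype.card (Fin (2 ^ (m+1))) = 2 ^ (m+1) := Fintype.card_fin _
    omega
  have hTeq : T.card = 2 ^ m := le_antisymm hTle hTge
  -- build the equivalence
  have hcardT : Fintype.card T = 2 ^ m := by rw [Fintype.card_coe, hTeq]
  let e : Fin (2 ^ m) ≃ T := (Fintype.equivFinOfCardEq hcardT).symm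
  refine ⟨fun j k => U (e j : Fin (2 ^ (m+1))) k.succ, fun j k => hU _ _, ?_, ?_⟩
  · intro j j'
    show star (a (e j : Fin (2 ^ (m+1)))) ⬝ᵥ a (e j' : Fin (2 ^ (m+1))) = _
    rw [hTanorth _ (e j).2 _ (e j').2]
    by_cases h : j = j'
    · rw [if_pos h, if_pos (by rw [h])]
    · rw [if_neg h, if_neg (fun hh => h (e.injective (Subtype.ext hh)))]
  · apply span_of_onb
    · rw [Fintype.card_fin, hcardκ]
    · intro j j'
      show star (a (e j : Fin (2 ^ (m+1)))) ⬝ᵥ a (e j' : Fin (2 ^ (m+1))) = _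
      rw [hTanorth _ (e j).2 _ (e j').2]
      by_cases h : j = j'
      · rw [if_pos h, if_pos (by rw [h])]
      · rw [if_neg h, if_neg (fun hh => h (e.injective (Subtype.ext hh)))]

end Stmt3Aux

/-- If some four-qubit unit state admits no basis under local unitaries, then for every
`n ≥ 4` some `n`-qubit unit state admits no basis under local unitaries. -/
theorem stmt3 (n : ℕ) (hn : 4 ≤ n)
    (h : ∃ ψ : (Fin 4 → Fin 2) → ℂ, star ψ ⬝ᵥ ψ = 1 ∧ ¬ AdmitsBasis 4 ψ) :
    ∃ ψ' : (Fin n → Fin 2) → ℂ, star ψ' ⬝ᵥ ψ' = 1 ∧ ¬ AdmitsBasis n ψ' := by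
  induction n, hn using Nat.le_induction with
  | base => exact h
  | succ m hm ih =>
    obtain ⟨φ, hφ, hnb⟩ := ih
    exact ⟨Stmt3Aux.extend φ, by rw [Stmt3Aux.extend_norm]; exact hφ,
      fun hAd => hnb (Stmt3Aux.step φ hAd)⟩
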